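/- Let d ≥ 1, Ω ∈ ℝ, and H : ℝᵈ → ℝ be differentiable. On (ℝᵈ)ᵈ with points (P₁,…,P_d), P_i = (p_{i1},…,p_{id}), define for each i ∈ {1,…,d} the mixed Hamiltonian H_i(P₁,…,P_d) := H(x₁,…,x_d) where x_j := p_{σ(i,j), j} and σ(i,j) ∈ {1,…,d} is the unique index congruent to d + j - i modulo d; define H_c := Σ_{1 ≤ i < j ≤ d} ‖P_i - P_j‖²/2 and H̄ := Σ_{i=1}^d H_i + Ω·H_c. Then for every P ∈ ℝᵈ, every copy index k ∈ {1,…,d}, and every coordinate j ∈ {1,…,d}, the partial derivative ∂H̄/∂p_{kj} evaluated at the diagonal point (P, P, …, P) equals ∂H/∂x_j(P); in particular the gradient of H̄ with respect to each copy, evaluated on the diagonal, equals ∇H(P). -/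

import Mathlib

open scoped BigOperators

/-- The i-th mixed Hamiltonian H_i(P₁,…,P_d) := H(x₁,…,x_d) where x_j := p_{σ(i,j),j}
and σ(i,j) is the unique index congruent to d + j - i modulo d (in 0-based indexing on
`Fin d` this is just j - i computed modulo d). -/
noncomputable def mixedHam (d : ℕ) (H : (Fin d → ℝ) → ℝ)
    (i : Fin d) (Z : Fin d → Fin d → ℝ) : ℝ :=
  H (fun j => Z (j - i) j)

/-- The constraint H_c := Σ_{i<j} ‖P_i - P_j‖₂²/2 (Euclidean 2-norm). -/
noncomputable def constraintHam (d : ℕ) (Z : Fin d → Fin d → ℝ) : ℝ :=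
  ∑ i : Fin d, ∑ j : Fin d,
    if i < j then (∑ l : Fin d, (Z i l - Z j l) ^ 2) / 2 else 0

/-- The augmented Hamiltonian H̄ := Σ_i H_i + Ω·H_c. -/
noncomputable def augHam (d : ℕ) (Ω : ℝ) (H : (Fin d → ℝ) → ℝ)
    (Z : Fin d → Fin d → ℝ) : ℝ :=
  (∑ i : Fin d, mixedHam d H i Z) + Ω * constraintHam d Z

/-- At a diagonal point (P,…,P), every partial derivative ∂H̄/∂p_{kj} of the augmented
Hamiltonian equals the corresponding partial derivative ∂H/∂x_j(P); in particular the
gradient of H̄ with respect to each copy, evaluated on the diagonal, equals ∇H(P). -/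
noncomputable def Lmap (d : ℕ) [NeZero d] (i : Fin d) :
    (Fin d → Fin d → ℝ) →L[ℝ] (Fin d → ℝ) :=
  ContinuousLinearMap.pi fun j =>
    (ContinuousLinearMap.proj (R := ℝ) (φ := fun _ : Fin d => ℝ) j).comp
      (ContinuousLinearMap.proj (R := ℝ) (φ := fun _ : Fin d => Fin d → ℝ) (j - i))

lemma Lmap_apply (d : ℕ) [NeZero d] (i : Fin d) (Z : Fin d → Fin d → ℝ) :
    Lmap d i Z = fun j => Z (j - i) j := rfl

lemma constraint_hasFDeriv (d : ℕ) (P : Fin d → ℝ) :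
    HasFDerivAt (constraintHam d) (0 : (Fin d → Fin d → ℝ) →L[ℝ] ℝ) (fun _ => P) := by
  have h : ∀ i j : Fin d, HasFDerivAt
      (fun Z : Fin d → Fin d → ℝ =>
        if i < j then (∑ l : Fin d, (Z i l - Z j l) ^ 2) / 2 else 0)
      (0 : (Fin d → Fin d → ℝ) →L[ℝ] ℝ) (fun _ => P) := by
    intro i j
    by_cases hij : i < j
    · simp only [if_pos hij]
      have hsum : HasFDerivAt
          (fun Z : Fin d → Fin d → ℝ => ∑ l : Fin d, (Z i l - Z j l) ^ 2)
          (0 : (Fin d → Fin d → ℝ) →L[ℝ] ℝ) (fun _ => P) := by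
        have : HasFDerivAt
            (fun Z : Fin d → Fin d → ℝ => ∑ l : Fin d, (Z i l - Z j l) ^ 2)
            (∑ l : Fin d, (0 : (Fin d → Fin d → ℝ) →L[ℝ] ℝ)) (fun _ => P) := by
          refine HasFDerivAt.fun_sum fun l _ => ?_
          have hA : HasFDerivAt (fun Z : Fin d → Fin d → ℝ => Z i l - Z j l)
              (((ContinuousLinearMap.proj (R := ℝ) (φ := fun _ : Fin d => ℝ) l).comp
                  (ContinuousLinearMap.proj (R := ℝ) (φ := fun _ : Fin d => Fin d → ℝ) i))
                - ((ContinuousLinearMap.proj (R := ℝ) (φ := fun _ : Fin d => ℝ) l).comp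
                  (ContinuousLinearMap.proj (R := ℝ) (φ := fun _ : Fin d => Fin d → ℝ) j)))
              (fun _ => P) := by
            exact (((ContinuousLinearMap.proj l).comp
              (ContinuousLinearMap.proj (R := ℝ) (φ := fun _ : Fin d => Fin d → ℝ) i)).hasFDerivAt).sub
              (((ContinuousLinearMap.proj l).comp
              (ContinuousLinearMap.proj (R := ℝ) (φ := fun _ : Fin d => Fin d → ℝ) j)).hasFDerivAt)
          have h2 := hA.fun_mul hA
          simpa [pow_two, sub_self] using h2
        simpa using this
      simpa [div_eq_mul_inv] using hsum.mul_const (2⁻¹ : ℝ)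
    · simp only [if_neg hij]
      exact hasFDerivAt_const 0 _
  have h2 : HasFDerivAt (constraintHam d)
      (∑ i : Fin d, ∑ j : Fin d, (0 : (Fin d → Fin d → ℝ) →L[ℝ] ℝ)) (fun _ => P) := by
    refine HasFDerivAt.fun_sum fun i _ => HasFDerivAt.fun_sum fun j _ => h i j
  simpa using h2

theorem augmented_hamiltonian_gradient_on_diagonal
    (d : ℕ) [NeZero d] (Ω : ℝ)
    (H : (Fin d → ℝ) → ℝ) (hH : Differentiable ℝ H) :
    ∀ P : Fin d → ℝ, ∀ k j : Fin d,
      fderiv ℝ (augHam d Ω H) (fun _ => P) (Pi.single k (Pi.single j 1))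
        = fderiv ℝ H P (Pi.single j 1) := by
  intro P k j
  set Z₀ : Fin d → Fin d → ℝ := fun _ => P with hZ₀
  have hLZ : ∀ i : Fin d, Lmap d i Z₀ = P := fun i => rfl
  have hmix : ∀ i : Fin d, HasFDerivAt (mixedHam d H i)
      ((fderiv ℝ H P).comp (Lmap d i)) Z₀ := by
    intro i
    have := ((hH P).hasFDerivAt).comp Z₀ (Lmap d i).hasFDerivAt
    exact this
  have hA : HasFDerivAt (fun Z => ∑ i : Fin d, mixedHam d H i Z)
      (∑ i : Fin d, (fderiv ℝ H P).comp (Lmap d i)) Z₀ :=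
    HasFDerivAt.fun_sum fun i _ => hmix i
  have hB : HasFDerivAt (fun Z => Ω * constraintHam d Z)
      (Ω • (0 : (Fin d → Fin d → ℝ) →L[ℝ] ℝ)) Z₀ :=
    (constraint_hasFDeriv d P).const_mul Ω
  have htot : HasFDerivAt (augHam d Ω H)
      ((∑ i : Fin d, (fderiv ℝ H P).comp (Lmap d i))
        + Ω • (0 : (Fin d → Fin d → ℝ) →L[ℝ] ℝ)) Z₀ := hA.add hB
  rw [htot.fderiv]
  have key : ∀ i : Fin d, Lmap d i (Pi.single k (Pi.single j 1))
      = if i = j - k then Pi.single j 1 else (0 : Fin d → ℝ) := by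
    intro i
    funext l
    rw [Lmap_apply]
    by_cases hl : l = j
    · subst hl
      by_cases hi : i = l - k
      · subst hi
        simp [Pi.single_apply, sub_sub_cancel]
      · have hne : l - (i : Fin d) ≠ k := by
          intro h
          apply hi
          rw [sub_eq_iff_eq_add] at h
          rw [h, add_sub_cancel_left]
        simp [Pi.single_apply, hne, hi]
    · simp [apply_ite (fun f : Fin d → ℝ => f l), Pi.single_apply, hl]
  simp only [ContinuousLinearMap.add_apply, ContinuousLinearMap.coe_sum',
    Finset.sum_apply, ContinuousLinearMap.comp_apply, ContinuousLinearMap.smul_apply,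
    ContinuousLinearMap.zero_apply, smul_zero, add_zero, key]
  have : ∀ i : Fin d, fderiv ℝ H P (if i = j - k then Pi.single j 1 else (0 : Fin d → ℝ))
      = if i = j - k then fderiv ℝ H P (Pi.single j 1) else 0 := by
    intro i; split_ifs <;> simp
  rw [Finset.sum_congr rfl (fun i _ => this i)]
  simp
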